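/- Let a < b, μ^L ≤ μ^U, 0 < Σ^L ≤ Σ^U, μ^c = (a+b)/2, and define F(μ,Σ) = ∫_a^b N(ξ|μ,Σ) dξ. Let μ̲* ∈ {μ^L, μ^U} be a point maximizing |μ − μ^c| over [μ^L, μ^U], and let Σ̲* ∈ {Σ^L, Σ^U} satisfy F(μ̲*, Σ̲*) = min( F(μ̲*, Σ^L), F(μ̲*, Σ^U) ). Let μ̄* be the point of [μ^L, μ^U] minimizing |μ − μ^c|, and set Σ̄* = Σ^L if μ̄* ∈ [a,b], and otherwise let Σ̄* be the point of [Σ^L, Σ^U] closest to Σ^c(μ̄*) = ((μ̄*−a)² − (μ̄*−b)²)/(2 log((μ̄*−a)/(μ̄*−b))). Then for every μ ∈ [μ^L, μ^U] and Σ ∈ [Σ^L, Σ^U] it holds that F(μ̲*, Σ̲*) ≤ F(μ, Σ) ≤ F(μ̄*, Σ̄*). -/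

import Mathlib

open MeasureTheory Real Set

/-- One-dimensional Gaussian density `N(ξ|μ,v) = (2πv)^{-1/2} exp(−(ξ−μ)²/(2v))`. -/
noncomputable def gaussPDF (μ v ξ : ℝ) : ℝ :=
  (Real.sqrt (2 * Real.pi * v))⁻¹ * Real.exp (-((ξ - μ) ^ 2) / (2 * v))

/-- The Gaussian box probability `F(μ,v) = ∫_a^b N(ξ|μ,v) dξ`. -/
noncomputable def gaussBoxProb (a b μ v : ℝ) : ℝ :=
  ∫ ξ in Set.Icc a b, gaussPDF μ v ξ

noncomputable def gg (t : ℝ) : ℝ := Real.exp (-(t ^ 2) / 2)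
noncomputable def GG (x : ℝ) : ℝ := ∫ t in (0:ℝ)..x, gg t

lemma gg_cont : Continuous gg := by
  unfold gg; fun_prop

lemma gg_pos (t : ℝ) : 0 < gg t := Real.exp_pos _

lemma GG_hasDerivAt (x : ℝ) : HasDerivAt GG (gg x) x :=
  (gg_cont.integral_hasStrictDerivAt 0 x).hasDerivAt

lemma gg_even (t : ℝ) : gg (-t) = gg t := by unfold gg; ring_nf

lemma GG_neg (x : ℝ) : GG (-x) = - GG x := by
  unfold GG
  have h1 : (∫ t in (0:ℝ)..x, gg (-t)) = ∫ t in (-x)..(0:ℝ), gg t := by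
    simpa using intervalIntegral.integral_comp_neg (a := (0:ℝ)) (b := x) gg
  have h2 : (∫ t in (0:ℝ)..x, gg (-t)) = ∫ t in (0:ℝ)..x, gg t := by
    simp [gg_even]
  rw [← h2, h1, intervalIntegral.integral_symm]

noncomputable def PP (a b μ s : ℝ) : ℝ :=
  (Real.sqrt (2 * Real.pi))⁻¹ * (GG ((b - μ) / s) - GG ((a - μ) / s))

lemma GG_sub (α β : ℝ) : GG β - GG α = ∫ t in α..β, gg t := by
  unfold GG
  exact intervalIntegral.integral_interval_sub_left
    (gg_cont.intervalIntegrable _ _) (gg_cont.intervalIntegrable _ _)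

lemma box_eq_PP (a b μ v : ℝ) (hab : a ≤ b) (hv : 0 < v) :
    gaussBoxProb a b μ v = PP a b μ (Real.sqrt v) := by
  set s := Real.sqrt v with hs
  have hs0 : 0 < s := Real.sqrt_pos.2 hv
  have hv' : v = s ^ 2 := (Real.sq_sqrt hv.le).symm
  have hpdf : ∀ ξ : ℝ, gaussPDF μ v ξ = (Real.sqrt (2 * Real.pi))⁻¹ * (s⁻¹ * gg ((ξ - μ) / s)) := by
    intro ξ
    unfold gaussPDF gg
    rw [show (2 * Real.pi * v) = (2 * Real.pi) * v by ring,
      Real.sqrt_mul (by positivity) v, ← hs, mul_inv]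
    rw [div_pow, hv']
    ring_nf
  have h1 : gaussBoxProb a b μ v = ∫ ξ in a..b, gaussPDF μ v ξ := by
    unfold gaussBoxProb
    rw [integral_Icc_eq_integral_Ioc, intervalIntegral.integral_of_le hab]
  rw [h1]
  simp only [hpdf]
  rw [intervalIntegral.integral_const_mul, intervalIntegral.integral_const_mul]
  have h2 : (∫ ξ in a..b, gg ((ξ - μ) / s)) = s * ∫ t in (a - μ)/s..(b - μ)/s, gg t := by
    have : ∀ ξ : ℝ, (ξ - μ) / s = s⁻¹ * ξ + (-μ / s) := by
      intro ξ; field_simp; ring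
    simp only [this]
    rw [intervalIntegral.integral_comp_mul_add gg (by positivity : s⁻¹ ≠ 0) (-μ / s)]
    rw [inv_inv, smul_eq_mul]
  rw [h2, PP, ← GG_sub]
  field_simp

lemma PP_hasDerivAt_mu (a b s μ : ℝ) (hs : s ≠ 0) :
    HasDerivAt (fun μ => PP a b μ s)
      ((Real.sqrt (2 * Real.pi))⁻¹ * (gg ((a - μ) / s) / s - gg ((b - μ) / s) / s)) μ := by
  have hb : HasDerivAt (fun μ : ℝ => (b - μ) / s) (-1 / s) μ :=
    ((hasDerivAt_id μ).const_sub b).div_const s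
  have ha : HasDerivAt (fun μ : ℝ => (a - μ) / s) (-1 / s) μ :=
    ((hasDerivAt_id μ).const_sub a).div_const s
  have hB := (GG_hasDerivAt ((b - μ) / s)).comp μ hb
  have hA := (GG_hasDerivAt ((a - μ) / s)).comp μ ha
  have := (hB.sub hA).const_mul (Real.sqrt (2 * Real.pi))⁻¹
  convert this using 1
  · rfl
  · rfl
  · rfl
  ring

lemma PP_hasDerivAt_s (a b μ s : ℝ) (hs : s ≠ 0) :
    HasDerivAt (fun s => PP a b μ s)
      ((Real.sqrt (2 * Real.pi))⁻¹ *
        (gg ((a - μ) / s) * ((a - μ) / s ^ 2) - gg ((b - μ) / s) * ((b - μ) / s ^ 2))) s := by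
  have hb : HasDerivAt (fun s : ℝ => (b - μ) / s) (-(b - μ) / s ^ 2) s := by
    have h := (hasDerivAt_inv hs).const_mul (b - μ)
    have e : -(b - μ) / s ^ 2 = (b - μ) * -(s ^ 2)⁻¹ := by field_simp
    rw [e]
    simpa [div_eq_mul_inv] using h
  have ha : HasDerivAt (fun s : ℝ => (a - μ) / s) (-(a - μ) / s ^ 2) s := by
    have h := (hasDerivAt_inv hs).const_mul (a - μ)
    have e : -(a - μ) / s ^ 2 = (a - μ) * -(s ^ 2)⁻¹ := by field_simp
    rw [e]
    simpa [div_eq_mul_inv] using h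
  have hB := (GG_hasDerivAt ((b - μ) / s)).comp s hb
  have hA := (GG_hasDerivAt ((a - μ) / s)).comp s ha
  have := (hB.sub hA).const_mul (Real.sqrt (2 * Real.pi))⁻¹
  convert this using 1
  · rfl
  · rfl
  · rfl
  ring

lemma sqrt2pi_pos : (0:ℝ) < (Real.sqrt (2 * Real.pi))⁻¹ := by positivity

lemma PP_antitoneOn_mu (a b s : ℝ) (hab : a ≤ b) (hs : 0 < s) :
    AntitoneOn (fun μ => PP a b μ s) (Ici ((a + b) / 2)) := by
  apply antitoneOn_of_deriv_nonpos (convex_Ici _)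
  · exact fun μ _ => (PP_hasDerivAt_mu a b s μ hs.ne').continuousAt.continuousWithinAt
  · exact fun μ _ => (PP_hasDerivAt_mu a b s μ hs.ne').differentiableAt.differentiableWithinAt
  · intro μ hμ
    rw [interior_Ici] at hμ
    rw [(PP_hasDerivAt_mu a b s μ hs.ne').deriv]
    have hμ' : (a + b) / 2 < μ := hμ
    have h1 : gg ((a - μ) / s) ≤ gg ((b - μ) / s) := by
      unfold gg
      apply Real.exp_le_exp.2
      rw [div_pow, div_pow]
      have hkey : (b - μ) ^ 2 ≤ (a - μ) ^ 2 := by nlinarith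
      have hs2 : (0:ℝ) < s ^ 2 := by positivity
      rw [neg_div, neg_div, neg_le_neg_iff, div_le_div_iff₀ (by norm_num) (by norm_num)]
      rw [div_mul_eq_mul_div, div_mul_eq_mul_div, div_le_div_iff₀ hs2 hs2]
      nlinarith
    have h2 : gg ((a - μ) / s) / s - gg ((b - μ) / s) / s ≤ 0 := by
      rw [div_sub_div_same]
      exact div_nonpos_of_nonpos_of_nonneg (sub_nonpos.2 h1) hs.le
    exact mul_nonpos_of_nonneg_of_nonpos sqrt2pi_pos.le h2

lemma PP_symm (a b μ s : ℝ) : PP a b (a + b - μ) s = PP a b μ s := by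
  unfold PP
  have h1 : (b - (a + b - μ)) / s = -((a - μ) / s) := by ring
  have h2 : (a - (a + b - μ)) / s = -((b - μ) / s) := by ring
  rw [h1, h2, GG_neg, GG_neg]
  ring

lemma PP_mu_le (a b s x y : ℝ) (hab : a ≤ b) (hs : 0 < s)
    (h : |x - (a + b) / 2| ≤ |y - (a + b) / 2|) : PP a b y s ≤ PP a b x s := by
  have key : ∀ z : ℝ, PP a b z s = PP a b ((a + b) / 2 + |z - (a + b) / 2|) s := by
    intro z
    rcases le_or_gt ((a + b) / 2) z with h1 | h1
    · rw [abs_of_nonneg (by linarith)]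
      norm_num
    · rw [abs_of_neg (by linarith)]
      have e : (a + b) / 2 + -(z - (a + b) / 2) = a + b - z := by ring
      rw [e, PP_symm]
  rw [key x, key y]
  exact PP_antitoneOn_mu a b s hab hs
    (mem_Ici.2 (le_add_of_nonneg_right (abs_nonneg _)))
    (mem_Ici.2 (le_add_of_nonneg_right (abs_nonneg _)))
    (by linarith)

lemma gg_div_eq (x s : ℝ) (hs : s ≠ 0) : gg (x / s) = Real.exp (-x ^ 2 / (2 * s ^ 2)) := by
  unfold gg
  congr 1
  rw [div_pow]
  ring

lemma PP_antitoneOn_s_inside (a b μ : ℝ) (ha : a ≤ μ) (hb : μ ≤ b) :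
    AntitoneOn (fun s => PP a b μ s) (Ioi (0:ℝ)) := by
  apply antitoneOn_of_deriv_nonpos (convex_Ioi _)
  · exact fun s hs => (PP_hasDerivAt_s a b μ s (ne_of_gt hs)).continuousAt.continuousWithinAt
  · rw [interior_Ioi]
    exact fun s hs => (PP_hasDerivAt_s a b μ s (ne_of_gt hs)).differentiableAt.differentiableWithinAt
  · intro s hs
    rw [interior_Ioi] at hs
    have hs : (0:ℝ) < s := hs
    rw [(PP_hasDerivAt_s a b μ s hs.ne').deriv]
    have h1 : gg ((a - μ) / s) * ((a - μ) / s ^ 2) ≤ 0 :=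
      mul_nonpos_of_nonneg_of_nonpos (gg_pos _).le
        (div_nonpos_of_nonpos_of_nonneg (by linarith) (by positivity))
    have h2 : 0 ≤ gg ((b - μ) / s) * ((b - μ) / s ^ 2) :=
      mul_nonneg (gg_pos _).le (div_nonneg (by linarith) (by positivity))
    exact mul_nonpos_of_nonneg_of_nonpos sqrt2pi_pos.le (by linarith)

lemma core1 (p q s : ℝ) (hp : 0 < p) (hpq : p < q) (hs : 0 < s)
    (h : s ^ 2 ≤ (q ^ 2 - p ^ 2) / (2 * Real.log (q / p))) :
    q * Real.exp (-q ^ 2 / (2 * s ^ 2)) ≤ p * Real.exp (-p ^ 2 / (2 * s ^ 2)) := by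
  have hq : 0 < q := hp.trans hpq
  have hL : 0 < Real.log (q / p) := Real.log_pos ((one_lt_div hp).2 hpq)
  have h1 : Real.log (q / p) ≤ (q ^ 2 - p ^ 2) / (2 * s ^ 2) := by
    rw [le_div_iff₀ (by positivity)] at h ⊢
    nlinarith
  have h2 : q / p ≤ Real.exp ((q ^ 2 - p ^ 2) / (2 * s ^ 2)) := by
    calc q / p = Real.exp (Real.log (q / p)) := (Real.exp_log (by positivity)).symm
    _ ≤ _ := Real.exp_le_exp.2 h1
  have h3 : q ≤ p * Real.exp ((q ^ 2 - p ^ 2) / (2 * s ^ 2)) := by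
    rw [div_le_iff₀ hp] at h2; linarith [h2]
  calc q * Real.exp (-q ^ 2 / (2 * s ^ 2))
      ≤ (p * Real.exp ((q ^ 2 - p ^ 2) / (2 * s ^ 2))) * Real.exp (-q ^ 2 / (2 * s ^ 2)) := by
        apply mul_le_mul_of_nonneg_right h3 (Real.exp_pos _).le
    _ = p * Real.exp (-p ^ 2 / (2 * s ^ 2)) := by
        rw [mul_assoc, ← Real.exp_add]
        congr 2
        field_simp
        ring

lemma core2 (p q s : ℝ) (hp : 0 < p) (hpq : p < q) (hs : 0 < s)
    (h : (q ^ 2 - p ^ 2) / (2 * Real.log (q / p)) ≤ s ^ 2) :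
    p * Real.exp (-p ^ 2 / (2 * s ^ 2)) ≤ q * Real.exp (-q ^ 2 / (2 * s ^ 2)) := by
  have hq : 0 < q := hp.trans hpq
  have hL : 0 < Real.log (q / p) := Real.log_pos ((one_lt_div hp).2 hpq)
  have h1 : (q ^ 2 - p ^ 2) / (2 * s ^ 2) ≤ Real.log (q / p) := by
    rw [div_le_iff₀ (by positivity : (0:ℝ) < 2 * Real.log (q / p))] at h
    rw [div_le_iff₀ (by positivity : (0:ℝ) < 2 * s ^ 2)]
    nlinarith
  have h2 : Real.exp ((q ^ 2 - p ^ 2) / (2 * s ^ 2)) ≤ q / p := by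
    calc Real.exp ((q ^ 2 - p ^ 2) / (2 * s ^ 2)) ≤ Real.exp (Real.log (q / p)) :=
        Real.exp_le_exp.2 h1
    _ = q / p := Real.exp_log (by positivity)
  have h3 : p * Real.exp ((q ^ 2 - p ^ 2) / (2 * s ^ 2)) ≤ q := by
    rw [le_div_iff₀ hp] at h2; linarith [h2]
  calc p * Real.exp (-p ^ 2 / (2 * s ^ 2))
      = (p * Real.exp ((q ^ 2 - p ^ 2) / (2 * s ^ 2))) * Real.exp (-q ^ 2 / (2 * s ^ 2)) := by
        rw [mul_assoc, ← Real.exp_add]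
        congr 2
        field_simp
        ring
    _ ≤ q * Real.exp (-q ^ 2 / (2 * s ^ 2)) :=
        mul_le_mul_of_nonneg_right h3 (Real.exp_pos _).le

noncomputable def vcfun (a b μ : ℝ) : ℝ :=
  ((μ - a) ^ 2 - (μ - b) ^ 2) / (2 * Real.log ((μ - a) / (μ - b)))

lemma vcfun_pos_right (a b μ : ℝ) (hab : a < b) (hμ : b < μ) : 0 < vcfun a b μ := by
  unfold vcfun
  have hp : (0:ℝ) < μ - b := by linarith
  have hq : (0:ℝ) < μ - a := by linarith
  have hL : 0 < Real.log ((μ - a) / (μ - b)) :=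
    Real.log_pos ((one_lt_div hp).2 (by linarith))
  apply div_pos (by nlinarith) (by positivity)

lemma vcfun_symm (a b μ : ℝ) (hab : a < b) (hμ : μ < a) :
    vcfun a b μ = vcfun a b (a + b - μ) := by
  unfold vcfun
  have h1 : a + b - μ - a = b - μ := by ring
  have h2 : a + b - μ - b = a - μ := by ring
  rw [h1, h2]
  have e1 : (μ - a) / (μ - b) = ((b - μ) / (a - μ))⁻¹ := by
    rw [inv_div, show μ - a = -(a - μ) by ring, show μ - b = -(b - μ) by ring, neg_div_neg_eq]
  rw [e1, Real.log_inv, mul_neg, div_neg,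
    show ((μ - a) ^ 2 - (μ - b) ^ 2) = -((b - μ) ^ 2 - (a - μ) ^ 2) by ring,
    neg_div, neg_neg]

lemma PP_funext_symm (a b μ : ℝ) :
    (fun s => PP a b μ s) = fun s => PP a b (a + b - μ) s := by
  funext s; rw [PP_symm]

lemma PP_out_mono_right (a b μ : ℝ) (hab : a < b) (hμ : b < μ) :
    MonotoneOn (fun s => PP a b μ s) (Ioc 0 (Real.sqrt (vcfun a b μ))) := by
  have hp : (0:ℝ) < μ - b := by linarith
  have hq : (0:ℝ) < μ - a := by linarith
  apply monotoneOn_of_deriv_nonneg (convex_Ioc _ _)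
  · exact fun s hs => (PP_hasDerivAt_s a b μ s (ne_of_gt hs.1)).continuousAt.continuousWithinAt
  · rw [interior_Ioc]
    exact fun s hs =>
      (PP_hasDerivAt_s a b μ s (ne_of_gt hs.1)).differentiableAt.differentiableWithinAt
  · intro s hs
    rw [interior_Ioc] at hs
    obtain ⟨hs0, hssc⟩ := hs
    rw [(PP_hasDerivAt_s a b μ s hs0.ne').deriv]
    have hvc : s ^ 2 ≤ vcfun a b μ := le_of_lt ((Real.lt_sqrt hs0.le).1 hssc)
    have key := core1 (μ - b) (μ - a) s hp (by linarith) hs0 hvc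
    have e1 : gg ((a - μ) / s) = Real.exp (-(μ - a) ^ 2 / (2 * s ^ 2)) := by
      rw [gg_div_eq _ _ hs0.ne']; congr 1; ring
    have e2 : gg ((b - μ) / s) = Real.exp (-(μ - b) ^ 2 / (2 * s ^ 2)) := by
      rw [gg_div_eq _ _ hs0.ne']; congr 1; ring
    have hs2 : (0:ℝ) < s ^ 2 := by positivity
    have expand : gg ((a - μ) / s) * ((a - μ) / s ^ 2) - gg ((b - μ) / s) * ((b - μ) / s ^ 2)
        = ((μ - b) * Real.exp (-(μ - b) ^ 2 / (2 * s ^ 2))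
            - (μ - a) * Real.exp (-(μ - a) ^ 2 / (2 * s ^ 2))) / s ^ 2 := by
      rw [e1, e2]; field_simp; ring
    rw [expand]
    exact mul_nonneg sqrt2pi_pos.le (div_nonneg (by linarith) hs2.le)

lemma PP_out_anti_right (a b μ : ℝ) (hab : a < b) (hμ : b < μ) :
    AntitoneOn (fun s => PP a b μ s) (Ici (Real.sqrt (vcfun a b μ))) := by
  have hp : (0:ℝ) < μ - b := by linarith
  have hq : (0:ℝ) < μ - a := by linarith
  have hvc0 : 0 < vcfun a b μ := vcfun_pos_right a b μ hab hμ
  have hsc0 : 0 < Real.sqrt (vcfun a b μ) := Real.sqrt_pos.2 hvc0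
  apply antitoneOn_of_deriv_nonpos (convex_Ici _)
  · exact fun s hs =>
      (PP_hasDerivAt_s a b μ s (ne_of_gt (lt_of_lt_of_le hsc0 hs))).continuousAt.continuousWithinAt
  · rw [interior_Ici]
    exact fun s hs =>
      (PP_hasDerivAt_s a b μ s (ne_of_gt (hsc0.trans hs))).differentiableAt.differentiableWithinAt
  · intro s hs
    rw [interior_Ici] at hs
    have hs0 : 0 < s := hsc0.trans hs
    rw [(PP_hasDerivAt_s a b μ s hs0.ne').deriv]
    have hvc : vcfun a b μ ≤ s ^ 2 := by
      have := Real.sqrt_le_sqrt (le_of_lt hs : Real.sqrt (vcfun a b μ) ≤ s)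
      calc vcfun a b μ = Real.sqrt (vcfun a b μ) ^ 2 := (Real.sq_sqrt hvc0.le).symm
        _ ≤ s ^ 2 := by nlinarith [(mem_Ioi.1 hs).le, hsc0.le]
    have key := core2 (μ - b) (μ - a) s hp (by linarith) hs0 hvc
    have e1 : gg ((a - μ) / s) = Real.exp (-(μ - a) ^ 2 / (2 * s ^ 2)) := by
      rw [gg_div_eq _ _ hs0.ne']; congr 1; ring
    have e2 : gg ((b - μ) / s) = Real.exp (-(μ - b) ^ 2 / (2 * s ^ 2)) := by
      rw [gg_div_eq _ _ hs0.ne']; congr 1; ring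
    have hs2 : (0:ℝ) < s ^ 2 := by positivity
    have expand : gg ((a - μ) / s) * ((a - μ) / s ^ 2) - gg ((b - μ) / s) * ((b - μ) / s ^ 2)
        = ((μ - b) * Real.exp (-(μ - b) ^ 2 / (2 * s ^ 2))
            - (μ - a) * Real.exp (-(μ - a) ^ 2 / (2 * s ^ 2))) / s ^ 2 := by
      rw [e1, e2]; field_simp; ring
    rw [expand]
    exact mul_nonpos_of_nonneg_of_nonpos sqrt2pi_pos.le
      (div_nonpos_of_nonpos_of_nonneg (by linarith) hs2.le)

lemma vcfun_pos (a b μ : ℝ) (hab : a < b) (hout : μ < a ∨ b < μ) : 0 < vcfun a b μ := by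
  rcases hout with h | h
  · rw [vcfun_symm a b μ hab h]
    exact vcfun_pos_right a b _ hab (by linarith)
  · exact vcfun_pos_right a b μ hab h

lemma PP_out_mono (a b μ : ℝ) (hab : a < b) (hout : μ < a ∨ b < μ) :
    MonotoneOn (fun s => PP a b μ s) (Ioc 0 (Real.sqrt (vcfun a b μ))) := by
  rcases hout with h | h
  · rw [PP_funext_symm a b μ, vcfun_symm a b μ hab h]
    exact PP_out_mono_right a b _ hab (by linarith)
  · exact PP_out_mono_right a b μ hab h

lemma PP_out_anti (a b μ : ℝ) (hab : a < b) (hout : μ < a ∨ b < μ) :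
    AntitoneOn (fun s => PP a b μ s) (Ici (Real.sqrt (vcfun a b μ))) := by
  rcases hout with h | h
  · rw [PP_funext_symm a b μ, vcfun_symm a b μ hab h]
    exact PP_out_anti_right a b _ hab (by linarith)
  · exact PP_out_anti_right a b μ hab h

lemma helper_min (a b m vL vU v : ℝ) (hab : a < b) (hvL : 0 < vL) (h1 : vL ≤ v) (h2 : v ≤ vU) :
    min (PP a b m (Real.sqrt vL)) (PP a b m (Real.sqrt vU)) ≤ PP a b m (Real.sqrt v) := by
  have hv0 : 0 < v := hvL.trans_le h1
  have hvU0 : 0 < vU := hv0.trans_le h2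
  by_cases hin : a ≤ m ∧ m ≤ b
  · refine le_trans (min_le_right _ _) ?_
    exact PP_antitoneOn_s_inside a b m hin.1 hin.2 (mem_Ioi.2 (Real.sqrt_pos.2 hv0))
      (mem_Ioi.2 (Real.sqrt_pos.2 hvU0)) (Real.sqrt_le_sqrt h2)
  · have hout : m < a ∨ b < m := by
      rcases not_and_or.1 hin with h | h
      exacts [Or.inl (lt_of_not_ge h), Or.inr (lt_of_not_ge h)]
    rcases le_total v (vcfun a b m) with hc | hc
    · refine le_trans (min_le_left _ _) ?_
      exact PP_out_mono a b m hab hout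
        ⟨Real.sqrt_pos.2 hvL, Real.sqrt_le_sqrt (h1.trans hc)⟩
        ⟨Real.sqrt_pos.2 hv0, Real.sqrt_le_sqrt hc⟩
        (Real.sqrt_le_sqrt h1)
    · refine le_trans (min_le_right _ _) ?_
      exact PP_out_anti a b m hab hout
        (mem_Ici.2 (Real.sqrt_le_sqrt hc))
        (mem_Ici.2 (Real.sqrt_le_sqrt (hc.trans h2)))
        (Real.sqrt_le_sqrt h2)

lemma helper_peak (a b m vL vU v w : ℝ) (hab : a < b) (hout : m < a ∨ b < m) (hvL : 0 < vL)
    (h1 : vL ≤ v) (h2 : v ≤ vU) (hw : w ∈ Icc vL vU)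
    (hcl : ∀ u ∈ Icc vL vU, |w - vcfun a b m| ≤ |u - vcfun a b m|) :
    PP a b m (Real.sqrt v) ≤ PP a b m (Real.sqrt w) := by
  have hvc := vcfun_pos a b m hab hout
  have hv0 : 0 < v := hvL.trans_le h1
  have hvU0 : 0 < vU := hv0.trans_le h2
  rcases le_total (vcfun a b m) vL with hA | hA
  · have hw' : w = vL := by
      have h3 := hcl vL ⟨le_refl _, h1.trans h2⟩
      rw [abs_of_nonneg (by linarith [hw.1]), abs_of_nonneg (by linarith)] at h3
      linarith [hw.1]
    rw [hw']
    exact PP_out_anti a b m hab hout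
      (mem_Ici.2 (Real.sqrt_le_sqrt hA))
      (mem_Ici.2 (Real.sqrt_le_sqrt (hA.trans h1)))
      (Real.sqrt_le_sqrt h1)
  rcases le_total vU (vcfun a b m) with hB | hB
  · have hw' : w = vU := by
      have h3 := hcl vU ⟨h1.trans h2, le_refl _⟩
      rw [abs_of_nonpos (by linarith [hw.2]), abs_of_nonpos (by linarith)] at h3
      linarith [hw.2]
    rw [hw']
    exact PP_out_mono a b m hab hout
      ⟨Real.sqrt_pos.2 hv0, Real.sqrt_le_sqrt (h2.trans hB)⟩
      ⟨Real.sqrt_pos.2 hvU0, Real.sqrt_le_sqrt hB⟩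
      (Real.sqrt_le_sqrt h2)
  · have hw' : w = vcfun a b m := by
      have h3 := hcl (vcfun a b m) ⟨hA, hB⟩
      have h4 : |w - vcfun a b m| = 0 :=
        le_antisymm (by simpa using h3) (abs_nonneg _)
      have := abs_eq_zero.1 h4
      linarith
    rw [hw']
    rcases le_total v (vcfun a b m) with hc | hc
    · exact PP_out_mono a b m hab hout
        ⟨Real.sqrt_pos.2 hv0, Real.sqrt_le_sqrt hc⟩
        ⟨Real.sqrt_pos.2 hvc, le_refl _⟩
        (Real.sqrt_le_sqrt hc)
    · exact PP_out_anti a b m hab hout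
        (mem_Ici.2 (le_refl _))
        (mem_Ici.2 (Real.sqrt_le_sqrt hc))
        (Real.sqrt_le_sqrt hc)

/-- Minimisation and maximisation of the Gaussian box probability over a mean/variance
rectangle `[μL,μU] × [vL,vU]`: with `μ̲*` a point of `{μL,μU}` maximising `|μ − μc|`,
`v̲* ∈ {vL,vU}` realising the smaller of the two values `F(μ̲*,·)`, `μ̄*` the point of
`[μL,μU]` minimising `|μ − μc|`, and `v̄*` equal to `vL` if `μ̄* ∈ [a,b]` and otherwise
the point of `[vL,vU]` closest to `vc(μ̄*)`, it holds that
`F(μ̲*,v̲*) ≤ F(μ,v) ≤ F(μ̄*,v̄*)` for all `μ ∈ [μL,μU]`, `v ∈ [vL,vU]`. -/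
theorem gaussian_box_probability_extrema (a b μL μU vL vU : ℝ)
    (hab : a < b) (hμ : μL ≤ μU) (hvL : 0 < vL) (hv : vL ≤ vU)
    (μlo vlo μhi vhi : ℝ)
    (hμlo_mem : μlo = μL ∨ μlo = μU)
    (hμlo_max : ∀ μ ∈ Set.Icc μL μU, |μ - (a + b) / 2| ≤ |μlo - (a + b) / 2|)
    (hvlo_mem : vlo = vL ∨ vlo = vU)
    (hvlo_min : gaussBoxProb a b μlo vlo
      = min (gaussBoxProb a b μlo vL) (gaussBoxProb a b μlo vU))
    (hμhi_mem : μhi ∈ Set.Icc μL μU)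
    (hμhi_min : ∀ μ ∈ Set.Icc μL μU, |μhi - (a + b) / 2| ≤ |μ - (a + b) / 2|)
    (hvhi_in : μhi ∈ Set.Icc a b → vhi = vL)
    (hvhi_out : μhi ∉ Set.Icc a b →
      vhi ∈ Set.Icc vL vU ∧
      ∀ v ∈ Set.Icc vL vU,
        |vhi - ((μhi - a) ^ 2 - (μhi - b) ^ 2) / (2 * Real.log ((μhi - a) / (μhi - b)))|
          ≤ |v - ((μhi - a) ^ 2 - (μhi - b) ^ 2) / (2 * Real.log ((μhi - a) / (μhi - b)))|) :
    ∀ μ ∈ Set.Icc μL μU, ∀ v ∈ Set.Icc vL vU,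
      gaussBoxProb a b μlo vlo ≤ gaussBoxProb a b μ v ∧
      gaussBoxProb a b μ v ≤ gaussBoxProb a b μhi vhi := by
  intro μ hμmem v hvmem
  obtain ⟨hv1, hv2⟩ := hvmem
  have hv0 : 0 < v := hvL.trans_le hv1
  have hvU0 : 0 < vU := hv0.trans_le hv2
  have hsv : 0 < Real.sqrt v := Real.sqrt_pos.2 hv0
  have hFv : gaussBoxProb a b μ v = PP a b μ (Real.sqrt v) := box_eq_PP a b μ v hab.le hv0
  constructor
  · -- lower bound
    have hstep1 : PP a b μlo (Real.sqrt v) ≤ PP a b μ (Real.sqrt v) :=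
      PP_mu_le a b (Real.sqrt v) μ μlo hab.le hsv (hμlo_max μ hμmem)
    have hstep2 : min (gaussBoxProb a b μlo vL) (gaussBoxProb a b μlo vU)
        ≤ PP a b μlo (Real.sqrt v) := by
      rw [box_eq_PP a b μlo vL hab.le hvL, box_eq_PP a b μlo vU hab.le hvU0]
      exact helper_min a b μlo vL vU v hab hvL hv1 hv2
    rw [hFv, hvlo_min]
    exact hstep2.trans hstep1
  · -- upper bound
    have hstep1 : PP a b μ (Real.sqrt v) ≤ PP a b μhi (Real.sqrt v) :=
      PP_mu_le a b (Real.sqrt v) μhi μ hab.le hsv (hμhi_min μ hμmem)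
    have hstep2 : PP a b μhi (Real.sqrt v) ≤ gaussBoxProb a b μhi vhi := by
      by_cases hin : μhi ∈ Set.Icc a b
      · rw [hvhi_in hin, box_eq_PP a b μhi vL hab.le hvL]
        exact PP_antitoneOn_s_inside a b μhi hin.1 hin.2
          (mem_Ioi.2 (Real.sqrt_pos.2 hvL)) (mem_Ioi.2 hsv) (Real.sqrt_le_sqrt hv1)
      · obtain ⟨hwmem, hcl⟩ := hvhi_out hin
        have hout : μhi < a ∨ b < μhi := by
          rw [Set.mem_Icc, not_and_or] at hin
          rcases hin with h | h
          exacts [Or.inl (lt_of_not_ge h), Or.inr (lt_of_not_ge h)]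
        have hvhi0 : 0 < vhi := hvL.trans_le hwmem.1
        rw [box_eq_PP a b μhi vhi hab.le hvhi0]
        exact helper_peak a b μhi vL vU v vhi hab hout hvL hv1 hv2 hwmem hcl
    rw [hFv]
    exact hstep1.trans hstep2
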